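/- Let H be self-adjoint on ℋ, λ₀ an eigenvalue of finite multiplicity with eigenprojection P₀, H̄ = H + P₀, and W a bounded self-adjoint operator. For z with Im z ≠ 0 define Q(z,W) = P₀ (H̄ + W − z)⁻¹ P₀. Then I − Q(z,W) is invertible on ℋ. -/

import Mathlib

/- Statement 1: I − Q(z,W) is invertible, where Q(z,W) = P₀ (H̄ + W − z)⁻¹ P₀. -/
theorem stmt_1 {ℋ : Type*} [NormedAddCommGroup ℋ] [InnerProductSpace ℂ ℋ] [CompleteSpace ℋ]
    (D : Submodule ℂ ℋ) (H : D →ₗ[ℂ] ℋ)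
    (hsym : ∀ x y : D, (inner ℂ (H x) (y : ℋ) : ℂ) = inner ℂ (x : ℋ) (H y))
    (l₀ : ℝ) (K : Submodule ℂ ℋ) [FiniteDimensional ℂ K]
    (hK : ∀ x : ℋ, x ∈ K ↔ ∃ hx : x ∈ D, H ⟨x, hx⟩ = (l₀ : ℂ) • x)
    (P₀ : ℋ →L[ℂ] ℋ) (hP₀ : ∀ x : ℋ, P₀ x = (K.orthogonalProjection x : ℋ))
    (W : ℋ →L[ℂ] ℋ) (hW : IsSelfAdjoint W)
    (z : ℂ) (hz : z.im ≠ 0)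
    (R : ℋ →L[ℂ] ℋ)  -- R = (H̄ + W − z)⁻¹
    (hR₁ : ∀ ψ : D, R (H ψ + P₀ (ψ : ℋ) + W (ψ : ℋ) - z • (ψ : ℋ)) = ψ)
    (hR₂ : ∀ y : ℋ, ∃ hy : R y ∈ D,
      H ⟨R y, hy⟩ + P₀ (R y) + W (R y) - z • (R y) = y) :
    IsUnit (1 - P₀ ∘L R ∘L P₀ : ℋ →L[ℂ] ℋ) := by
  set Q : ℋ →L[ℂ] ℋ := P₀ ∘L R ∘L P₀ with hQdef
  have hrange : ∀ w : ℋ, P₀ w ∈ K := fun w => by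
    rw [hP₀]; exact (K.orthogonalProjection w).2
  have hproj : ∀ x ∈ K, P₀ x = x := fun x hx => by
    rw [hP₀]
    exact congrArg Subtype.val (Submodule.orthogonalProjection_mem_subspace_eq_self (⟨x, hx⟩ : K))
  have hPsa : ∀ u v : ℋ, (inner ℂ (P₀ u) v : ℂ) = inner ℂ u (P₀ v) := fun u v => by
    rw [hP₀, hP₀]; exact K.inner_starProjection_left_eq_right u v
  -- key identity
  have key : ∀ y : ℋ, (inner ℂ y (R y) : ℂ).im = z.im * ‖R y‖ ^ 2 := by
    intro y
    obtain ⟨hy, heq⟩ := hR₂ y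
    set ψ : ℋ := R y with hψ
    have h1 : (inner ℂ ψ (H ⟨ψ, hy⟩) : ℂ).im = 0 := by
      have h := hsym ⟨ψ, hy⟩ ⟨ψ, hy⟩
      have h2 : starRingEnd ℂ (inner ℂ ψ (H ⟨ψ, hy⟩) : ℂ) = inner ℂ ψ (H ⟨ψ, hy⟩) := by
        rw [inner_conj_symm]; exact h
      exact Complex.conj_eq_iff_im.mp h2
    have h2 : (inner ℂ ψ (P₀ ψ) : ℂ).im = 0 := by
      have h2' : starRingEnd ℂ (inner ℂ ψ (P₀ ψ) : ℂ) = inner ℂ ψ (P₀ ψ) := by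
        rw [inner_conj_symm]; exact hPsa ψ ψ
      exact Complex.conj_eq_iff_im.mp h2'
    have h3 : (inner ℂ ψ (W ψ) : ℂ).im = 0 := by
      have h3' : starRingEnd ℂ (inner ℂ ψ (W ψ) : ℂ) = inner ℂ ψ (W ψ) := by
        rw [inner_conj_symm]; exact hW.isSymmetric ψ ψ
      exact Complex.conj_eq_iff_im.mp h3'
    have expand : (inner ℂ ψ y : ℂ) =
        inner ℂ ψ (H ⟨ψ, hy⟩) + inner ℂ ψ (P₀ ψ) + inner ℂ ψ (W ψ) - z * inner ℂ ψ ψ := by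
      conv_lhs => rw [← heq]
      simp [inner_add_right, inner_sub_right, inner_smul_right]
      have hs : (inner ℂ ψ ψ : ℂ) = (‖ψ‖ : ℂ) ^ 2 := inner_self_eq_norm_sq_to_K ψ
      rw [← hs]
    have hself : (inner ℂ ψ ψ : ℂ) = (‖ψ‖ : ℂ) ^ 2 := inner_self_eq_norm_sq_to_K ψ
    have him : (inner ℂ ψ y : ℂ).im = - (z.im * ‖ψ‖ ^ 2) := by
      rw [expand, hself]
      simp [Complex.sub_im, Complex.add_im, Complex.mul_im, h1, h2, h3, ← Complex.ofReal_pow]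
    have : (inner ℂ y ψ : ℂ) = starRingEnd ℂ (inner ℂ ψ y : ℂ) := (inner_conj_symm y ψ).symm
    rw [this, Complex.conj_im, him]
    ring
  -- injectivity of 1 - Q
  have hinj : ∀ x : ℋ, x = Q x → x = 0 := by
    intro x hx
    have hxK : x ∈ K := by rw [hx]; exact hrange _
    have hPx : P₀ x = x := hproj x hxK
    have hx' : x = P₀ (R x) := by
      conv_lhs => rw [hx]
      simp [hQdef, ContinuousLinearMap.comp_apply, hPx]
    have him : (inner ℂ x (R x) : ℂ).im = 0 := by
      have heq2 : (inner ℂ x (R x) : ℂ) = inner ℂ x x := by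
        calc (inner ℂ x (R x) : ℂ) = inner ℂ (P₀ x) (R x) := by rw [hPx]
          _ = inner ℂ x (P₀ (R x)) := hPsa _ _
          _ = inner ℂ x x := by rw [← hx']
      rw [heq2, inner_self_eq_norm_sq_to_K]
      simp [← Complex.ofReal_pow]
    have hz2 := key x
    rw [him] at hz2
    have hR0 : ‖R x‖ ^ 2 = 0 := by
      rcases mul_eq_zero.mp hz2.symm with h | h
      · exact absurd h hz
      · exact h
    have : R x = 0 := by
      have := pow_eq_zero_iff (n := 2) (by norm_num) |>.mp hR0
      exact norm_eq_zero.mp this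
    rw [hx', this, map_zero]
  -- finite-dimensional inversion
  have hQK : ∀ w : ℋ, Q w ∈ K := fun w => hrange _
  let Qc : ℋ →L[ℂ] K := Q.codRestrict K hQK
  let T : K →L[ℂ] K := Qc ∘L K.subtypeL
  let A : K →ₗ[ℂ] K := (ContinuousLinearMap.id ℂ K - T : K →L[ℂ] K)
  have hAinj : Function.Injective A := by
    rw [← LinearMap.ker_eq_bot, LinearMap.ker_eq_bot']
    intro u hu
    have : (u : ℋ) = Q u := by
      have : u - T u = 0 := hu
      have h2 : u = T u := by rwa [sub_eq_zero] at this
      exact congrArg Subtype.val h2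
    exact Subtype.ext (hinj u this)
  have hAbij : Function.Bijective A :=
    ⟨hAinj, (LinearMap.injective_iff_surjective).mp hAinj⟩
  let e : K ≃L[ℂ] K := (LinearEquiv.ofBijective A hAbij).toContinuousLinearEquiv
  have hA : ∀ v : K, e v = v - T v := fun v => rfl
  have heL : ∀ v : K, e.symm (v - T v) = v := fun v => by
    rw [← hA]; exact e.symm_apply_apply v
  have heR : ∀ v : K, (e.symm v : K) - T (e.symm v) = v := fun v => by
    rw [← hA]; exact e.apply_symm_apply v
  let Binv : ℋ →L[ℂ] ℋ := 1 + K.subtypeL ∘L (e.symm : K →L[ℂ] K) ∘L Qc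
  have hQc : ∀ y : ℋ, Q y = ((Qc y : K) : ℋ) := fun y => rfl
  have hT : ∀ u : K, Q (u : ℋ) = ((T u : K) : ℋ) := fun u => rfl
  have h1 : (1 - Q) * Binv = 1 := by
    ext y
    have : (1 - Q) (Binv y) = y := by
      have hB : Binv y = y + ((e.symm (Qc y) : K) : ℋ) := rfl
      rw [hB]
      simp only [ContinuousLinearMap.sub_apply, ContinuousLinearMap.one_apply, map_add]
      rw [hQc y, hT (e.symm (Qc y))]
      have := congrArg (Subtype.val : K → ℋ) (heR (Qc y))
      push_cast at this ⊢
      rw [← this]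
      abel
    simpa using this
  have h2 : Binv * (1 - Q) = 1 := by
    ext y
    have : Binv ((1 - Q) y) = y := by
      have hQcA : Qc (y - Q y) = Qc y - T (Qc y) := by
        apply Subtype.ext
        have : Q (y - Q y) = Q y - Q (Q y) := by rw [map_sub]
        show Q (y - Q y) = ((Qc y : K) : ℋ) - ((T (Qc y) : K) : ℋ)
        rw [this, ← hQc y, ← hT (Qc y), ← hQc y]
      have hB : Binv ((1 - Q) y) = (y - Q y) + ((e.symm (Qc (y - Q y)) : K) : ℋ) := rfl
      rw [hB]
      show y - Q y + _ = y
      rw [hQcA, heL (Qc y), ← hQc y]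
      abel
    simpa using this
  exact ⟨⟨1 - Q, Binv, h1, h2⟩, rfl⟩
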